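/- For n ≥ 2 and d ≥ n+2, the k-algebra A_{n,d} := k[x_1,...,x_n]/(x_i x_j for 1 ≤ i < j ≤ n, x_h^2 - x_1^{d-n} for 2 ≤ h ≤ n) is a local Artinian Gorenstein k-algebra of dimension d over k with Hilbert function (1, n, 1, 1, ..., 1) (with d - n - 1 trailing ones). -/

import Mathlib

set_option synthInstance.maxHeartbeats 1000000
set_option maxHeartbeats 1000000

open MvPolynomial

/-- Hilbert function of the quotient `k[x_1,…,x_n]/I` : `i ↦ dim_k M^i/M^{i+1}` where `M` is
the image of the irrelevant maximal ideal (computed as a difference of dimensions). -/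
noncomputable def hilbFn {k : Type*} [Field k] {n : ℕ}
    (I : Ideal (MvPolynomial (Fin n) k)) (i : ℕ) : ℕ :=
  Module.finrank k (Submodule.restrictScalars k
    ((Ideal.map (Ideal.Quotient.mk I)
      (Ideal.span (Set.range (X : Fin n → MvPolynomial (Fin n) k)))) ^ i)) -
  Module.finrank k (Submodule.restrictScalars k
    ((Ideal.map (Ideal.Quotient.mk I)
      (Ideal.span (Set.range (X : Fin n → MvPolynomial (Fin n) k)))) ^ (i + 1)))

namespace Stmt2Aux

variable {k : Type*} [Field k] {n : ℕ}

/-- generators of the ideal -/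
def gens (k : Type*) [Field k] (n e : ℕ) (z : Fin n) : Set (MvPolynomial (Fin n) k) :=
  {p | ∃ i j : Fin n, i < j ∧ p = X i * X j} ∪
  {p | ∃ h : Fin n, h ≠ z ∧ p = X h ^ 2 - X z ^ e}

/-- the dual socle generator functional -/
noncomputable def Lf (e : ℕ) (z : Fin n) : MvPolynomial (Fin n) k →ₗ[k] k :=
  lcoeff k (Finsupp.single z e) + ∑ h ∈ Finset.univ.erase z, lcoeff k (Finsupp.single h 2)

lemma Lf_apply (e : ℕ) (z : Fin n) (p : MvPolynomial (Fin n) k) :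
    Lf e z p = coeff (Finsupp.single z e) p
      + ∑ h ∈ Finset.univ.erase z, coeff (Finsupp.single h 2) p := by
  simp [Lf]

lemma Lf_mul_XX (e : ℕ) (z : Fin n) (q : MvPolynomial (Fin n) k) {i j : Fin n} (hij : i ≠ j) :
    Lf e z (q * (X i * X j)) = 0 := by
  have hXX : X i * X j = monomial (Finsupp.single i 1 + Finsupp.single j 1) (1 : k) := by
    rw [X, X, monomial_mul, one_mul]
  have key : ∀ (a : Fin n) (c : ℕ),
      ¬ (Finsupp.single i 1 + Finsupp.single j 1 ≤ Finsupp.single a (c : ℕ)) := by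
    intro a c hle
    by_cases hai : a = i
    · subst hai
      have hj := Finsupp.le_def.mp hle j
      simp [Finsupp.single_apply, hij, Ne.symm hij] at hj
    · have hi := Finsupp.le_def.mp hle i
      simp [Finsupp.single_apply, hij, Ne.symm hij, hai] at hi
  rw [hXX, Lf_apply, coeff_mul_monomial', if_neg (key z e)]
  rw [Finset.sum_congr rfl (fun h _ => by rw [coeff_mul_monomial', if_neg (key h 2)])]
  simp

lemma Lf_mul_gen2 {e : ℕ} (he : 2 ≤ e) (z : Fin n) (q : MvPolynomial (Fin n) k)
    {h : Fin n} (hh : h ≠ z) :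
    Lf e z (q * (X h ^ 2 - X z ^ e)) = 0 := by
  have h2 : (X h : MvPolynomial (Fin n) k) ^ 2 = monomial (Finsupp.single h 2) 1 :=
    X_pow_eq_monomial
  have hze : (X z : MvPolynomial (Fin n) k) ^ e = monomial (Finsupp.single z e) 1 :=
    X_pow_eq_monomial
  rw [mul_sub, map_sub, Lf_apply, Lf_apply, h2, hze]
  have c1 : coeff (Finsupp.single z e) (q * monomial (Finsupp.single h 2) (1:k)) = 0 := by
    rw [coeff_mul_monomial', if_neg]
    intro hle
    have := Finsupp.le_def.mp hle h
    simp [Finsupp.single_apply, Ne.symm hh] at this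
  have c2 : ∀ h' ∈ Finset.univ.erase z,
      coeff (Finsupp.single h' 2) (q * monomial (Finsupp.single h 2) (1:k))
        = if h' = h then coeff 0 q else 0 := by
    intro h' _
    by_cases hh' : h' = h
    · subst hh'
      rw [coeff_mul_monomial', if_pos le_rfl, if_pos rfl, tsub_self, mul_one]
    · rw [coeff_mul_monomial', if_neg, if_neg hh']
      intro hle
      have := Finsupp.le_def.mp hle h
      simp [Finsupp.single_apply, hh'] at this
  have c3 : coeff (Finsupp.single z e) (q * monomial (Finsupp.single z e) (1:k))
      = coeff 0 q := by
    rw [coeff_mul_monomial', if_pos le_rfl, tsub_self, mul_one]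
  have c4 : ∀ h' ∈ Finset.univ.erase z,
      coeff (Finsupp.single h' 2) (q * monomial (Finsupp.single z e) (1:k)) = 0 := by
    intro h' hh'
    rw [Finset.mem_erase] at hh'
    rw [coeff_mul_monomial', if_neg]
    intro hle
    have := Finsupp.le_def.mp hle z
    simp [Finsupp.single_apply, hh'.1] at this
    omega
  rw [c1, c3, Finset.sum_congr rfl c2, Finset.sum_congr rfl c4, Finset.sum_ite_eq',
    if_pos (Finset.mem_erase.mpr ⟨hh, Finset.mem_univ h⟩)]
  simp

/-- elements killed by `Lf` after arbitrary multiplication form an ideal -/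
def Kf (e : ℕ) (z : Fin n) : Ideal (MvPolynomial (Fin n) k) where
  carrier := {p | ∀ q, Lf e z (q * p) = 0}
  add_mem' := by intro a b ha hb q; rw [mul_add, map_add, ha, hb, add_zero]
  zero_mem' := by intro q; rw [mul_zero, map_zero]
  smul_mem' := by intro c x hx q; rw [smul_eq_mul, ← mul_assoc]; exact hx (q * c)

lemma span_gens_le_Kf {e : ℕ} (he : 2 ≤ e) (z : Fin n) :
    Ideal.span (gens k n e z) ≤ Kf e z := by
  rw [Ideal.span_le]
  rintro p (⟨i, j, hij, rfl⟩ | ⟨h, hh, rfl⟩)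
  · exact fun q => Lf_mul_XX e z q hij.ne
  · exact fun q => Lf_mul_gen2 he z q hh

lemma Lf_mul_eq_zero {e : ℕ} (he : 2 ≤ e) (z : Fin n) {p : MvPolynomial (Fin n) k}
    (hp : p ∈ Ideal.span (gens k n e z)) (q : MvPolynomial (Fin n) k) :
    Lf e z (q * p) = 0 :=
  span_gens_le_Kf he z hp q

lemma Lf_eq_zero {e : ℕ} (he : 2 ≤ e) (z : Fin n) {p : MvPolynomial (Fin n) k}
    (hp : p ∈ Ideal.span (gens k n e z)) : Lf e z p = 0 := by
  simpa using Lf_mul_eq_zero he z hp 1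

/-- the quotient algebra's linear functional -/
noncomputable def Lq {e : ℕ} (he : 2 ≤ e) (z : Fin n) :
    (MvPolynomial (Fin n) k ⧸ Ideal.span (gens k n e z)) →ₗ[k] k :=
  (Submodule.liftQ ((Ideal.span (gens k n e z)).restrictScalars k) (Lf e z)
    (fun _p hp => LinearMap.mem_ker.mpr (Lf_eq_zero he z hp))) ∘ₗ
  (Submodule.Quotient.restrictScalarsEquiv k (Ideal.span (gens k n e z))).symm.toLinearMap

lemma Lq_mk {e : ℕ} (he : 2 ≤ e) (z : Fin n) (p : MvPolynomial (Fin n) k) :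
    Lq he z (Ideal.Quotient.mk (Ideal.span (gens k n e z)) p) = Lf e z p := by
  rw [Lq]
  simp only [LinearMap.comp_apply, LinearEquiv.coe_toLinearMap]
  rw [← Ideal.Quotient.mk_eq_mk, Submodule.Quotient.restrictScalarsEquiv_symm_mk,
    Submodule.liftQ_apply]

/-- index type for the monomial basis -/
abbrev Idx (n e : ℕ) (z : Fin n) := Fin (e+1) ⊕ {h : Fin n // h ≠ z}

/-- exponents of basis monomials -/
noncomputable def Em {e : ℕ} {z : Fin n} (i : Idx n e z) : Fin n →₀ ℕ :=
  match i with
  | .inl j => Finsupp.single z (j : ℕ)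
  | .inr h => Finsupp.single (h : Fin n) 1

/-- exponents of the dual monomials -/
noncomputable def Dm {e : ℕ} {z : Fin n} (i : Idx n e z) : Fin n →₀ ℕ :=
  match i with
  | .inl j => Finsupp.single z (e - (j : ℕ))
  | .inr h => Finsupp.single (h : Fin n) 1

@[simp] lemma Em_inl {e : ℕ} {z : Fin n} (j : Fin (e+1)) :
    Em (Sum.inl j : Idx n e z) = Finsupp.single z (j : ℕ) := rfl
@[simp] lemma Em_inr {e : ℕ} {z : Fin n} (h : {h : Fin n // h ≠ z}) :
    Em (Sum.inr h : Idx n e z) = Finsupp.single (h : Fin n) 1 := rfl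
@[simp] lemma Dm_inl {e : ℕ} {z : Fin n} (j : Fin (e+1)) :
    Dm (Sum.inl j : Idx n e z) = Finsupp.single z (e - (j : ℕ)) := rfl
@[simp] lemma Dm_inr {e : ℕ} {z : Fin n} (h : {h : Fin n // h ≠ z}) :
    Dm (Sum.inr h : Idx n e z) = Finsupp.single (h : Fin n) 1 := rfl

lemma pair {e : ℕ} (he : 2 ≤ e) (z : Fin n) (i i' : Idx n e z) :
    Lf e z (monomial (Em i + Dm i') (1:k)) = if i = i' then 1 else 0 := by
  rw [Lf_apply]
  rcases i with j | h <;> rcases i' with j' | h'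
  · -- inl inl : single z (j + (e - j'))
    have hj := j.isLt
    have hj' := j'.isLt
    have hs : Em (Sum.inl j : Idx n e z) + Dm (Sum.inl j' : Idx n e z)
        = Finsupp.single z ((j : ℕ) + (e - (j' : ℕ))) := by
      rw [Em_inl, Dm_inl, ← Finsupp.single_add]
    rw [hs]
    have hz : coeff (Finsupp.single z e)
        (monomial (Finsupp.single z ((j:ℕ) + (e - (j':ℕ)))) (1:k))
        = if (Sum.inl j : Idx n e z) = Sum.inl j' then 1 else 0 := by
      rw [coeff_monomial]
      by_cases hjj : j = j'
      · subst hjj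
        rw [if_pos (by congr 1; omega), if_pos rfl]
      · have hne : ¬ Finsupp.single z ((j:ℕ) + (e - (j':ℕ))) = Finsupp.single z e := by
          intro H
          have hval : (j : ℕ) + (e - (j' : ℕ)) = e := by
            have := DFunLike.congr_fun H z
            simpa using this
          exact hjj (Fin.ext (by omega))
        rw [if_neg hne, if_neg (by simp [hjj])]
    rw [hz, Finset.sum_congr rfl (fun h hmem => ?_), Finset.sum_const_zero, add_zero]
    rw [Finset.mem_erase] at hmem
    rw [coeff_monomial, if_neg]
    intro H
    have := DFunLike.congr_fun H h
    simp [Finsupp.single_apply, Ne.symm hmem.1] at this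
  · -- inl inr
    rw [if_neg (by simp)]
    have hzz : z ≠ (h' : Fin n) := Ne.symm h'.2
    have hval : ∀ a : Fin n, (Em (Sum.inl j : Idx n e z) + Dm (Sum.inr h' : Idx n e z)) a
        = Finsupp.single z (j : ℕ) a + Finsupp.single (h' : Fin n) 1 a := fun a => rfl
    have hz : coeff (Finsupp.single z e)
        (monomial (Em (Sum.inl j : Idx n e z) + Dm (Sum.inr h' : Idx n e z)) (1:k)) = 0 := by
      rw [coeff_monomial, if_neg]
      intro H
      have := DFunLike.congr_fun H (h' : Fin n)
      rw [hval] at this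
      simp [Finsupp.single_apply, hzz, h'.2] at this
    rw [hz, Finset.sum_congr rfl (fun h hmem => ?_), Finset.sum_const_zero, add_zero]
    rw [coeff_monomial, if_neg]
    intro H
    have := DFunLike.congr_fun H (h' : Fin n)
    rw [hval] at this
    by_cases hhh : h = (h' : Fin n) <;>
      simp [Finsupp.single_apply, hzz, hhh] at this
  · -- inr inl
    rw [if_neg (by simp)]
    have hzz : z ≠ (h : Fin n) := Ne.symm h.2
    have hval : ∀ a : Fin n, (Em (Sum.inr h : Idx n e z) + Dm (Sum.inl j' : Idx n e z)) a
        = Finsupp.single (h : Fin n) 1 a + Finsupp.single z (e - (j' : ℕ)) a := fun a => rfl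
    have hz : coeff (Finsupp.single z e)
        (monomial (Em (Sum.inr h : Idx n e z) + Dm (Sum.inl j' : Idx n e z)) (1:k)) = 0 := by
      rw [coeff_monomial, if_neg]
      intro H
      have := DFunLike.congr_fun H (h : Fin n)
      rw [hval] at this
      simp [Finsupp.single_apply, hzz, h.2] at this
    rw [hz, Finset.sum_congr rfl (fun h'' hmem => ?_), Finset.sum_const_zero, add_zero]
    rw [coeff_monomial, if_neg]
    intro H
    have := DFunLike.congr_fun H (h : Fin n)
    rw [hval] at this
    by_cases hhh : h'' = (h : Fin n) <;>
      simp [Finsupp.single_apply, hzz, hhh] at this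
  · -- inr inr
    have hzh : z ≠ (h : Fin n) := Ne.symm h.2
    have hval : ∀ a : Fin n, (Em (Sum.inr h : Idx n e z) + Dm (Sum.inr h' : Idx n e z)) a
        = Finsupp.single (h : Fin n) 1 a + Finsupp.single (h' : Fin n) 1 a := fun a => rfl
    have hz : coeff (Finsupp.single z e)
        (monomial (Em (Sum.inr h : Idx n e z) + Dm (Sum.inr h' : Idx n e z)) (1:k)) = 0 := by
      rw [coeff_monomial, if_neg]
      intro H
      have := DFunLike.congr_fun H (h : Fin n)
      rw [hval] at this
      by_cases hhh : (h' : Fin n) = (h : Fin n) <;>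
        simp [Finsupp.single_apply, hzh, hhh] at this
    rw [hz, zero_add]
    have hterm : ∀ h'' ∈ Finset.univ.erase z,
        coeff (Finsupp.single h'' 2)
          (monomial (Em (Sum.inr h : Idx n e z) + Dm (Sum.inr h' : Idx n e z)) (1:k))
        = if h'' = (h : Fin n) then (if h = h' then (1:k) else 0) else 0 := by
      intro h'' hmem
      rw [coeff_monomial]
      by_cases hc : h'' = (h : Fin n)
      · subst hc
        by_cases hhh : h = h'
        · subst hhh
          rw [if_pos, if_pos rfl, if_pos rfl]
          ext a
          rw [hval]
          simp [Finsupp.single_apply]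
          split <;> rfl
        · rw [if_neg, if_pos rfl, if_neg hhh]
          intro H
          have := DFunLike.congr_fun H (h' : Fin n)
          rw [hval] at this
          have hne : (h' : Fin n) ≠ (h : Fin n) := fun x => hhh (Subtype.ext x).symm
          simp [Finsupp.single_apply, hne, Ne.symm hne] at this
      · rw [if_neg hc, if_neg]
        intro H
        have := DFunLike.congr_fun H (h : Fin n)
        rw [hval] at this
        by_cases hd : (h' : Fin n) = (h : Fin n) <;>
          simp [Finsupp.single_apply, hd, hc, Ne.symm hc] at this
    rw [Finset.sum_congr rfl hterm, Finset.sum_ite_eq' (Finset.univ.erase z) ((h : Fin n)),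
      if_pos (Finset.mem_erase.mpr ⟨h.2, Finset.mem_univ _⟩)]
    by_cases hhh : h = h'
    · rw [if_pos hhh, if_pos (by rw [hhh])]
    · rw [if_neg hhh, if_neg (by simp [hhh])]

/-- basis vectors of the quotient -/
noncomputable def vB (k : Type*) [Field k] {n : ℕ} (e : ℕ) (z : Fin n) (i : Idx n e z) :
    MvPolynomial (Fin n) k ⧸ Ideal.span (gens k n e z) :=
  Ideal.Quotient.mk _ (monomial (Em i) 1)

lemma vB_li {e : ℕ} (he : 2 ≤ e) (z : Fin n) : LinearIndependent k (vB k e z) := by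
  rw [Fintype.linearIndependent_iff]
  intro g hg i
  classical
  set w := Ideal.Quotient.mk (Ideal.span (gens k n e z)) (monomial (Dm i) (1:k)) with hw
  let F := (Lq he z).comp (LinearMap.mulRight k w)
  have hFv : ∀ i' : Idx n e z, F (vB k e z i') = if i' = i then 1 else 0 := by
    intro i'
    show Lq he z (vB k e z i' * w) = _
    rw [vB, hw, ← map_mul, monomial_mul, mul_one, Lq_mk, pair he]
  have hF := congrArg F hg
  rw [map_sum, map_zero] at hF
  simp only [map_smul, hFv, smul_eq_mul, mul_ite, mul_one, mul_zero] at hF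
  rw [Finset.sum_ite_eq' Finset.univ i, if_pos (Finset.mem_univ i)] at hF
  exact hF

lemma r1 {e : ℕ} (z : Fin n) {i j : Fin n} (hij : i ≠ j) :
    Ideal.Quotient.mk (Ideal.span (gens k n e z)) (X i * X j) = 0 := by
  rw [Ideal.Quotient.eq_zero_iff_mem]
  rcases lt_or_gt_of_ne hij with hlt | hgt
  · exact Ideal.subset_span (Or.inl ⟨i, j, hlt, rfl⟩)
  · exact Ideal.subset_span (Or.inl ⟨j, i, hgt, by rw [mul_comm]⟩)

lemma r2 {e : ℕ} (z : Fin n) {h : Fin n} (hh : h ≠ z) :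
    Ideal.Quotient.mk (Ideal.span (gens k n e z)) (X h ^ 2)
      = Ideal.Quotient.mk (Ideal.span (gens k n e z)) (X z ^ e) :=
  Ideal.Quotient.eq.mpr (Ideal.subset_span (Or.inr ⟨h, hh, rfl⟩))

lemma mkXzeXh {e : ℕ} (he : 1 ≤ e) (z : Fin n) {h : Fin n} (hh : h ≠ z) :
    Ideal.Quotient.mk (Ideal.span (gens k n e z)) (X z ^ e * X h) = 0 := by
  have hsplit : (X z : MvPolynomial (Fin n) k) ^ e * X h
      = X z ^ (e - 1) * (X z * X h) := by
    rw [← mul_assoc, ← pow_succ]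
    congr 2
    omega
  rw [hsplit, map_mul, r1 z (Ne.symm hh), mul_zero]

lemma r3 (hn : 2 ≤ n) {e : ℕ} (he : 2 ≤ e) (z : Fin n) :
    Ideal.Quotient.mk (Ideal.span (gens k n e z)) (X z ^ (e + 1)) = 0 := by
  obtain ⟨h, hh⟩ := Fintype.exists_ne_of_one_lt_card (by simp; omega) z
  calc Ideal.Quotient.mk (Ideal.span (gens k n e z)) (X z ^ (e+1))
      = Ideal.Quotient.mk (Ideal.span (gens k n e z)) (X h ^ 2)
        * Ideal.Quotient.mk (Ideal.span (gens k n e z)) (X z) := by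
        rw [pow_succ, map_mul, ← r2 z hh]
    _ = Ideal.Quotient.mk (Ideal.span (gens k n e z)) (X h)
        * Ideal.Quotient.mk (Ideal.span (gens k n e z)) (X h * X z) := by
        rw [← map_mul, ← map_mul]
        congr 1
        ring
    _ = 0 := by rw [r1 z hh, mul_zero]

/-- polynomials all of whose monomials have degree at least `i` -/
def Ndeg (k : Type*) [Field k] (n : ℕ) (i : ℕ) : Ideal (MvPolynomial (Fin n) k) where
  carrier := {p | ∀ m ∈ p.support, i ≤ m.sum fun _ c => c}
  zero_mem' := by simp
  add_mem' := by
    classical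
    intro a b ha hb m hm
    rcases Finset.mem_union.mp (MvPolynomial.support_add hm) with h | h
    · exact ha m h
    · exact hb m h
  smul_mem' := by
    classical
    intro c x hx m hm
    rw [smul_eq_mul] at hm
    obtain ⟨m1, hm1, m2, hm2, rfl⟩ := Finset.mem_add.mp (MvPolynomial.support_mul c x hm)
    rw [Finsupp.sum_add_index' (fun _ => rfl) (fun _ _ _ => rfl)]
    exact le_add_left (hx m2 hm2)

lemma mul_mem_Ndeg {a b : ℕ} {p q : MvPolynomial (Fin n) k}
    (hp : p ∈ Ndeg k n a) (hq : q ∈ Ndeg k n b) : p * q ∈ Ndeg k n (a + b) := by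
  classical
  intro m hm
  obtain ⟨m1, hm1, m2, hm2, rfl⟩ := Finset.mem_add.mp (MvPolynomial.support_mul p q hm)
  rw [Finsupp.sum_add_index' (fun _ => rfl) (fun _ _ _ => rfl)]
  exact add_le_add (hp m1 hm1) (hq m2 hm2)

lemma spanX_le_Ndeg1 :
    Ideal.span (Set.range (X : Fin n → MvPolynomial (Fin n) k)) ≤ Ndeg k n 1 := by
  rw [Ideal.span_le]
  rintro _ ⟨t, rfl⟩
  intro m hm
  rw [support_X] at hm
  rw [Finset.mem_singleton] at hm
  subst hm
  simp [Finsupp.sum_single_index]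

lemma powX_le_Ndeg (i : ℕ) :
    (Ideal.span (Set.range (X : Fin n → MvPolynomial (Fin n) k))) ^ i ≤ Ndeg k n i := by
  induction i with
  | zero => rw [pow_zero, Ideal.one_eq_top]; intro p _ m _; exact Nat.zero_le _
  | succ i ih =>
    rw [pow_succ]
    apply Ideal.mul_le.mpr
    intro r hr s hs
    exact mul_mem_Ndeg (ih hr) (spanX_le_Ndeg1 hs)

/-- the index subsets whose basis vectors span the powers of the maximal ideal -/
def TT {n : ℕ} (e : ℕ) (z : Fin n) (i : ℕ) : Set (Idx n e z) :=
  {x | match x with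
       | .inl j => i ≤ (j : ℕ)
       | .inr _ => i ≤ 1}

lemma inl_mem_TT {e : ℕ} {z : Fin n} {i : ℕ} (j : Fin (e+1)) :
    (Sum.inl j : Idx n e z) ∈ TT e z i ↔ i ≤ (j : ℕ) := Iff.rfl

lemma inr_mem_TT {e : ℕ} {z : Fin n} {i : ℕ} (h : {h : Fin n // h ≠ z}) :
    (Sum.inr h : Idx n e z) ∈ TT e z i ↔ i ≤ 1 := Iff.rfl

lemma mk_monomial_mem (hn : 2 ≤ n) {e : ℕ} (he : 2 ≤ e) (z : Fin n) (i : ℕ)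
    (m : Fin n →₀ ℕ) (hm : i ≤ m.sum fun _ c => c) :
    Ideal.Quotient.mk (Ideal.span (gens k n e z)) (monomial m 1)
      ∈ Submodule.span k (vB k e z '' TT e z i) := by
  classical
  by_cases hsupp : ∃ a b : Fin n, a ≠ b ∧ m a ≠ 0 ∧ m b ≠ 0
  · obtain ⟨a, b, hab, ha, hb⟩ := hsupp
    have hfact : monomial m (1:k)
        = (X a * X b) * monomial (m - Finsupp.single a 1 - Finsupp.single b 1) 1 := by
      have hexp : m = Finsupp.single a 1 + Finsupp.single b 1
          + (m - Finsupp.single a 1 - Finsupp.single b 1) := by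
        ext c
        simp only [Finsupp.add_apply, Finsupp.tsub_apply, Finsupp.single_apply]
        by_cases hac : a = c <;> by_cases hbc : b = c
        · exact absurd (hac.trans hbc.symm) hab
        · simp only [if_pos hac, if_neg hbc]; subst hac; omega
        · simp only [if_neg hac, if_pos hbc]; subst hbc; omega
        · simp only [if_neg hac, if_neg hbc]; omega
      rw [X, X, monomial_mul, monomial_mul, mul_one, one_mul, ← hexp]
    rw [hfact, map_mul, r1 z hab, zero_mul]
    exact Submodule.zero_mem _
  · push_neg at hsupp
    by_cases hm0 : m = 0
    · subst hm0
      have hi : i = 0 := by simpa using hm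
      subst hi
      apply Submodule.subset_span
      refine ⟨Sum.inl ⟨0, by omega⟩, (inl_mem_TT _).mpr (Nat.zero_le _), ?_⟩
      rw [vB, Em_inl, show ((⟨0, by omega⟩ : Fin (e+1)) : ℕ) = 0 from rfl, Finsupp.single_zero]
    · obtain ⟨h, hh⟩ := Finsupp.support_nonempty_iff.mpr hm0
      have hms : m = Finsupp.single h (m h) := by
        apply Finsupp.support_subset_singleton.mp
        intro b hb
        rw [Finset.mem_singleton]
        by_contra hbh
        exact (Finsupp.mem_support_iff.mp hh) (hsupp b h hbh (Finsupp.mem_support_iff.mp hb))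
      have hs0 : m h ≠ 0 := Finsupp.mem_support_iff.mp hh
      set s := m h with hs
      have hsum : (m.sum fun _ c => c) = s := by rw [hms]; exact Finsupp.sum_single_index rfl
      rw [hsum] at hm
      rw [hms]
      by_cases hhz : h = z
      · subst hhz
        by_cases hse : s ≤ e
        · apply Submodule.subset_span
          exact ⟨Sum.inl ⟨s, by omega⟩, (inl_mem_TT _).mpr hm, by rw [vB, Em_inl]⟩
        · rw [← X_pow_eq_monomial]
          have hzero : Ideal.Quotient.mk (Ideal.span (gens k n e h)) (X h ^ s) = 0 := by
            have h1 : (X h : MvPolynomial (Fin n) k) ^ s = X h ^ (e+1) * X h ^ (s - e - 1) := by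
              rw [← pow_add]; congr 1; omega
            rw [h1, map_mul, r3 hn he h, zero_mul]
          rw [hzero]
          exact Submodule.zero_mem _
      · by_cases hs1 : s = 1
        · rw [hs1]
          apply Submodule.subset_span
          exact ⟨Sum.inr ⟨h, hhz⟩, (inr_mem_TT _).mpr (by omega), by rw [vB, Em_inr]⟩
        · by_cases hs2 : s = 2
          · rw [hs2, ← X_pow_eq_monomial, r2 z hhz, X_pow_eq_monomial]
            apply Submodule.subset_span
            exact ⟨Sum.inl ⟨e, by omega⟩, (inl_mem_TT _).mpr (show i ≤ e by omega),
              by rw [vB, Em_inl]⟩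
          · have hs3 : 3 ≤ s := by omega
            rw [← X_pow_eq_monomial]
            have hzero : Ideal.Quotient.mk (Ideal.span (gens k n e z)) (X h ^ s) = 0 := by
              have h1 : (X h : MvPolynomial (Fin n) k) ^ s = X h ^ 2 * X h ^ (s-2) := by
                rw [← pow_add]; congr 1; omega
              rw [h1, map_mul, r2 z hhz, ← map_mul]
              have h2 : (X z : MvPolynomial (Fin n) k) ^ e * X h ^ (s-2)
                  = (X z ^ e * X h) * X h ^ (s-3) := by
                rw [mul_assoc]
                congr 1
                rw [← pow_succ']
                congr 1
                omega
              rw [h2, map_mul, mkXzeXh (by omega) z hhz, zero_mul]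
            rw [hzero]
            exact Submodule.zero_mem _



lemma mk_mem_span (hn : 2 ≤ n) {e : ℕ} (he : 2 ≤ e) (z : Fin n) (i : ℕ)
    {p : MvPolynomial (Fin n) k} (hp : ∀ m ∈ p.support, i ≤ m.sum fun _ c => c) :
    Ideal.Quotient.mk (Ideal.span (gens k n e z)) p
      ∈ Submodule.span k (vB k e z '' TT e z i) := by
  classical
  rw [as_sum p, map_sum]
  apply Submodule.sum_mem
  intro m hmsup
  have h1 : Ideal.Quotient.mk (Ideal.span (gens k n e z)) (monomial m (coeff m p))
      = (coeff m p) • Ideal.Quotient.mk (Ideal.span (gens k n e z)) (monomial m 1) := by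
    rw [← Ideal.Quotient.mkₐ_eq_mk k, ← map_smul, smul_monomial, smul_eq_mul, mul_one]
  rw [h1]
  exact Submodule.smul_mem _ _ (mk_monomial_mem hn he z i m (hp m hmsup))

lemma Mi_eq (hn : 2 ≤ n) {e : ℕ} (he : 2 ≤ e) (z : Fin n) (i : ℕ) :
    Submodule.restrictScalars k
      ((Ideal.map (Ideal.Quotient.mk (Ideal.span (gens k n e z)))
        (Ideal.span (Set.range (X : Fin n → MvPolynomial (Fin n) k)))) ^ i)
      = Submodule.span k (vB k e z '' TT e z i) := by
  apply le_antisymm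
  · intro x hx
    rw [Submodule.restrictScalars_mem, ← Ideal.map_pow] at hx
    obtain ⟨p, hp, rfl⟩ := (Ideal.mem_map_iff_of_surjective _ Ideal.Quotient.mk_surjective).mp hx
    exact mk_mem_span hn he z i (fun m hm => powX_le_Ndeg i hp m hm)
  · rw [Submodule.span_le]
    rintro _ ⟨x, hxT, rfl⟩
    rw [SetLike.mem_coe, Submodule.restrictScalars_mem]
    rcases x with j | h
    · rw [inl_mem_TT] at hxT
      have hv : vB k e z (Sum.inl j)
          = (Ideal.Quotient.mk (Ideal.span (gens k n e z)) (X z)) ^ i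
            * (Ideal.Quotient.mk (Ideal.span (gens k n e z)) (X z)) ^ ((j:ℕ) - i) := by
        rw [vB, Em_inl, ← X_pow_eq_monomial, ← map_pow, ← map_pow, ← map_mul, ← pow_add]
        congr 2
        omega
      rw [hv]
      exact Ideal.mul_mem_right _ _
        (Ideal.pow_mem_pow (Ideal.mem_map_of_mem _ (Ideal.subset_span (Set.mem_range_self z))) i)
    · rw [inr_mem_TT] at hxT
      interval_cases i
      · simp [Ideal.one_eq_top]
      · rw [Submodule.pow_one, vB, Em_inr,
          show (monomial (Finsupp.single (h:Fin n) 1) (1:k)) = X (h:Fin n) from rfl]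
        exact Ideal.mem_map_of_mem _ (Ideal.subset_span (Set.mem_range_self (h:Fin n)))

lemma TT_zero {e : ℕ} (z : Fin n) : TT e z 0 = Set.univ := by
  ext x
  rcases x with j | h
  · simp [inl_mem_TT]
  · simp [inr_mem_TT]

lemma span_vB_top (hn : 2 ≤ n) {e : ℕ} (he : 2 ≤ e) (z : Fin n) :
    Submodule.span k (Set.range (vB k e z)) = ⊤ := by
  have h0 := Mi_eq (k := k) hn he z 0
  rw [Submodule.pow_zero, Ideal.one_eq_top, Submodule.restrictScalars_top, TT_zero, Set.image_univ] at h0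
  exact h0.symm

/-- the monomial basis of the quotient -/
noncomputable def bA (hn : 2 ≤ n) {e : ℕ} (he : 2 ≤ e) (z : Fin n) :
    Module.Basis (Idx n e z) k (MvPolynomial (Fin n) k ⧸ Ideal.span (gens k n e z)) :=
  Module.Basis.mk (vB_li he z) (by rw [span_vB_top hn he z])

lemma card_Idx {e : ℕ} (z : Fin n) (hn : 2 ≤ n) :
    Fintype.card (Idx n e z) = n + e := by
  rw [Fintype.card_sum, Fintype.card_fin]
  have h1 : Fintype.card {h : Fin n // h ≠ z} = n - 1 := by
    rw [Fintype.card_subtype_compl, Fintype.card_subtype_eq, Fintype.card_fin]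
  omega

lemma finrank_A (hn : 2 ≤ n) {e : ℕ} (he : 2 ≤ e) (z : Fin n) :
    Module.finrank k (MvPolynomial (Fin n) k ⧸ Ideal.span (gens k n e z)) = n + e := by
  rw [Module.finrank_eq_card_basis (bA hn he z), card_Idx z hn]

/-- index family for the first power -/
def u1 {n e : ℕ} {z : Fin n} (x : Fin e ⊕ {h : Fin n // h ≠ z}) : Idx n e z :=
  match x with
  | .inl j => Sum.inl ⟨(j:ℕ)+1, by omega⟩
  | .inr h => Sum.inr h

lemma u1_inj {e : ℕ} {z : Fin n} : Function.Injective (u1 (n := n) (e := e) (z := z)) := by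
  rintro (a|a) (b|b) hab <;> simp [u1] at hab ⊢
  · exact Fin.ext (by omega)
  · exact hab

lemma range_u1 {e : ℕ} {z : Fin n} : Set.range (u1 (n := n) (e := e) (z := z)) = TT e z 1 := by
  ext x
  constructor
  · rintro ⟨y, rfl⟩
    rcases y with j | h
    · exact (inl_mem_TT _).mpr (by simp [u1])
    · exact (inr_mem_TT _).mpr le_rfl
  · intro hx
    rcases x with j | h
    · rw [inl_mem_TT] at hx
      have hj := j.isLt
      exact ⟨Sum.inl ⟨(j:ℕ)-1, by omega⟩, by simp only [u1]; congr 1; apply Fin.ext; show (j:ℕ)-1+1 = (j:ℕ); omega⟩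
    · exact ⟨Sum.inr h, rfl⟩

/-- index family for higher powers -/
def u2 {n e : ℕ} {z : Fin n} (i : ℕ) (t : Fin (e+1-i)) : Idx n e z :=
  Sum.inl ⟨i + (t:ℕ), by have := t.isLt; omega⟩

lemma u2_inj {e : ℕ} {z : Fin n} (i : ℕ) : Function.Injective (u2 (n := n) (e := e) (z := z) i) := by
  intro a b hab
  simp only [u2, Sum.inl.injEq, Fin.mk.injEq] at hab
  exact Fin.ext (by omega)

lemma range_u2 {e : ℕ} {z : Fin n} {i : ℕ} (hi : 2 ≤ i) :
    Set.range (u2 (n := n) (e := e) (z := z) i) = TT e z i := by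
  ext x
  constructor
  · rintro ⟨t, rfl⟩
    exact (inl_mem_TT _).mpr (by simp [u2])
  · intro hx
    rcases x with j | h
    · rw [inl_mem_TT] at hx
      have hj := j.isLt
      exact ⟨⟨(j:ℕ) - i, by omega⟩, by simp only [u2]; congr 1; apply Fin.ext; show i + ((j:ℕ) - i) = (j:ℕ); omega⟩
    · rw [inr_mem_TT] at hx
      omega

lemma finrank_M1 (hn : 2 ≤ n) {e : ℕ} (he : 2 ≤ e) (z : Fin n) :
    Module.finrank k (Submodule.restrictScalars k
      ((Ideal.map (Ideal.Quotient.mk (Ideal.span (gens k n e z)))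
        (Ideal.span (Set.range (X : Fin n → MvPolynomial (Fin n) k)))) ^ 1))
      = n + e - 1 := by
  rw [Mi_eq hn he z 1, ← range_u1, ← Set.range_comp,
    finrank_span_eq_card ((vB_li he z).comp u1 u1_inj), Fintype.card_sum, Fintype.card_fin,
    Fintype.card_subtype_compl, Fintype.card_subtype_eq, Fintype.card_fin]
  omega

lemma finrank_Mi (hn : 2 ≤ n) {e : ℕ} (he : 2 ≤ e) (z : Fin n) {i : ℕ} (hi : 2 ≤ i) :
    Module.finrank k (Submodule.restrictScalars k
      ((Ideal.map (Ideal.Quotient.mk (Ideal.span (gens k n e z)))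
        (Ideal.span (Set.range (X : Fin n → MvPolynomial (Fin n) k)))) ^ i))
      = e + 1 - i := by
  rw [Mi_eq hn he z i, ← range_u2 hi, ← Set.range_comp,
    finrank_span_eq_card ((vB_li he z).comp (u2 i) (u2_inj i)), Fintype.card_fin]

lemma coord_eq (hn : 2 ≤ n) {e : ℕ} (he : 2 ≤ e) (z : Fin n) (i : Idx n e z) :
    (bA hn he z).coord i = (Lq he z).comp
      (LinearMap.mulRight k (Ideal.Quotient.mk (Ideal.span (gens k n e z))
        (monomial (Dm i) (1:k)))) := by
  apply Module.Basis.ext (bA hn he z)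
  intro i'
  rw [Module.Basis.coord_apply, Module.Basis.repr_self]
  have hb : bA hn he z i' = vB k e z i' := by rw [bA, Module.Basis.mk_apply]
  rw [LinearMap.comp_apply, LinearMap.mulRight_apply, hb, vB, ← map_mul, monomial_mul, mul_one,
    Lq_mk, pair he]
  rw [Finsupp.single_apply]

lemma mk_Xze_mul (hn : 2 ≤ n) {e : ℕ} (he : 2 ≤ e) (z : Fin n)
    {q : MvPolynomial (Fin n) k} (hq : q ∈ Ideal.span (Set.range X)) :
    Ideal.Quotient.mk (Ideal.span (gens k n e z)) (X z ^ e * q) = 0 := by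
  induction hq using Submodule.span_induction with
  | mem x hx =>
    obtain ⟨t, rfl⟩ := hx
    by_cases htz : t = z
    · subst htz
      rw [← pow_succ, r3 hn he t]
    · exact mkXzeXh (by omega) z htz
  | zero => simp
  | add x y _ _ hx hy => rw [mul_add, map_add, hx, hy, add_zero]
  | smul c x _ hx =>
    rw [smul_eq_mul, show (X z : MvPolynomial (Fin n) k) ^ e * (c * x)
      = c * (X z ^ e * x) by ring, map_mul, hx, mul_zero]

lemma socle_eq (hn : 2 ≤ n) {e : ℕ} (he : 2 ≤ e) (z : Fin n) :
    Submodule.restrictScalars k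
      (Submodule.colon (⊥ : Ideal (MvPolynomial (Fin n) k ⧸ Ideal.span (gens k n e z)))
        (Ideal.map (Ideal.Quotient.mk (Ideal.span (gens k n e z)))
          (Ideal.span (Set.range (X : Fin n → MvPolynomial (Fin n) k)))))
      = Submodule.span k {vB k e z (Sum.inl ⟨e, by omega⟩)} := by
  apply le_antisymm
  · intro s hs
    rw [Submodule.restrictScalars_mem, Submodule.mem_colon] at hs
    have hrepr : ∀ i : Idx n e z, i ≠ Sum.inl ⟨e, by omega⟩ → (bA hn he z).repr s i = 0 := by
      intro i hi
      rw [← Module.Basis.coord_apply, coord_eq hn he z i]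
      have hmem : Ideal.Quotient.mk (Ideal.span (gens k n e z)) (monomial (Dm i) (1:k))
          ∈ Ideal.map (Ideal.Quotient.mk (Ideal.span (gens k n e z)))
            (Ideal.span (Set.range (X : Fin n → MvPolynomial (Fin n) k))) := by
        apply Ideal.mem_map_of_mem
        rcases i with j | h
        · have hj : (j : ℕ) ≠ e := by
            intro hje
            exact hi (by congr 1; exact Fin.ext hje)
          have hj2 := j.isLt
          rw [Dm_inl, ← X_pow_eq_monomial,
            show (X z : MvPolynomial (Fin n) k) ^ (e - (j:ℕ))
              = X z ^ (e - (j:ℕ) - 1) * X z by rw [← pow_succ]; congr 1; omega]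
          exact Ideal.mul_mem_left _ _ (Ideal.subset_span (Set.mem_range_self z))
        · rw [Dm_inr, show (monomial (Finsupp.single (h:Fin n) 1) (1:k)) = X (h:Fin n) from rfl]
          exact Ideal.subset_span (Set.mem_range_self _)
      have h0 := hs _ hmem
      rw [smul_eq_mul, Ideal.mem_bot] at h0
      rw [LinearMap.comp_apply, LinearMap.mulRight_apply, h0, map_zero]
    rw [← Module.Basis.sum_repr (bA hn he z) s]
    apply Submodule.sum_mem
    intro i _
    by_cases hie : i = Sum.inl ⟨e, by omega⟩
    · subst hie
      apply Submodule.smul_mem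
      apply Submodule.subset_span
      rw [bA, Module.Basis.mk_apply]
      exact rfl
    · rw [hrepr i hie, zero_smul]
      exact Submodule.zero_mem _
  · rw [Submodule.span_le, Set.singleton_subset_iff, SetLike.mem_coe,
      Submodule.restrictScalars_mem, Submodule.mem_colon]
    intro p hp
    obtain ⟨q, hq, rfl⟩ := (Ideal.mem_map_iff_of_surjective _ Ideal.Quotient.mk_surjective).mp hp
    rw [smul_eq_mul, Ideal.mem_bot, vB, Em_inl, ← map_mul,
      show ((⟨e, by omega⟩ : Fin (e+1)) : ℕ) = e from rfl, ← X_pow_eq_monomial]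
    exact mk_Xze_mul hn he z hq

lemma finrank_socle (hn : 2 ≤ n) {e : ℕ} (he : 2 ≤ e) (z : Fin n) :
    Module.finrank k (Submodule.restrictScalars k
      (Submodule.colon (⊥ : Ideal (MvPolynomial (Fin n) k ⧸ Ideal.span (gens k n e z)))
        (Ideal.map (Ideal.Quotient.mk (Ideal.span (gens k n e z)))
          (Ideal.span (Set.range (X : Fin n → MvPolynomial (Fin n) k)))))) = 1 := by
  rw [socle_eq hn he z]
  apply finrank_span_singleton
  have := (bA (k := k) hn he z).ne_zero (Sum.inl ⟨e, by omega⟩)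
  rwa [bA, Module.Basis.mk_apply] at this

lemma TT_top {e : ℕ} (z : Fin n) {i : ℕ} (hi : e + 1 ≤ i) (h2 : 2 ≤ i) :
    TT e z i = (∅ : Set (Idx n e z)) := by
  ext x
  rcases x with j | h
  · simp only [inl_mem_TT, Set.mem_empty_iff_false, iff_false]
    have := j.isLt
    omega
  · simp only [inr_mem_TT, Set.mem_empty_iff_false, iff_false]
    omega

lemma M_pow_eq_bot (hn : 2 ≤ n) {e : ℕ} (he : 2 ≤ e) (z : Fin n) :
    (Ideal.map (Ideal.Quotient.mk (Ideal.span (gens k n e z)))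
      (Ideal.span (Set.range (X : Fin n → MvPolynomial (Fin n) k)))) ^ (e + 1) = ⊥ := by
  rw [eq_bot_iff]
  intro x hx
  have h := Mi_eq (k := k) hn he z (e+1)
  have hx' : x ∈ Submodule.restrictScalars k
      ((Ideal.map (Ideal.Quotient.mk (Ideal.span (gens k n e z)))
        (Ideal.span (Set.range (X : Fin n → MvPolynomial (Fin n) k)))) ^ (e+1)) := hx
  rw [h, TT_top z (le_refl (e+1)) (by omega), Set.image_empty, Submodule.span_empty] at hx'
  exact hx'

lemma mk_nilpotent (hn : 2 ≤ n) {e : ℕ} (he : 2 ≤ e) (z : Fin n)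
    {a : MvPolynomial (Fin n) k ⧸ Ideal.span (gens k n e z)}
    (ha : a ∈ Ideal.map (Ideal.Quotient.mk (Ideal.span (gens k n e z)))
      (Ideal.span (Set.range (X : Fin n → MvPolynomial (Fin n) k)))) :
    IsNilpotent a := by
  refine ⟨e + 1, ?_⟩
  have := Ideal.pow_mem_pow ha (e+1)
  rwa [M_pow_eq_bot hn he z, Ideal.mem_bot] at this

lemma sub_C_mem_spanX (p : MvPolynomial (Fin n) k) :
    p - C (coeff 0 p) ∈ Ideal.span (Set.range (X : Fin n → MvPolynomial (Fin n) k)) := by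
  classical
  have key : ∀ q : MvPolynomial (Fin n) k, coeff 0 q = 0 →
      q ∈ Ideal.span (Set.range (X : Fin n → MvPolynomial (Fin n) k)) := by
    intro q hq
    rw [as_sum q]
    apply Submodule.sum_mem
    intro m hm
    have hm0 : m ≠ 0 := by
      intro h0
      rw [h0, MvPolynomial.mem_support_iff] at hm
      exact hm hq
    obtain ⟨a, ha⟩ : ∃ a, m a ≠ 0 := by
      by_contra hall
      push_neg at hall
      exact hm0 (Finsupp.ext fun a => hall a)
    have hexp : m = Finsupp.single a 1 + (m - Finsupp.single a 1) := by
      ext c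
      simp only [Finsupp.add_apply, Finsupp.tsub_apply, Finsupp.single_apply]
      by_cases hac : a = c
      · simp only [if_pos hac]
        subst hac
        omega
      · simp only [if_neg hac]
        omega
    have hfact : monomial m (coeff m q)
        = X a * monomial (m - Finsupp.single a 1) (coeff m q) := by
      rw [X, monomial_mul, one_mul, ← hexp]
    rw [hfact]
    exact Ideal.mul_mem_right _ _ (Ideal.subset_span (Set.mem_range_self a))
  apply key
  rw [coeff_sub, coeff_zero_C, sub_self]

lemma isLocal (hn : 2 ≤ n) {e : ℕ} (he : 2 ≤ e) (z : Fin n) :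
    IsLocalRing (MvPolynomial (Fin n) k ⧸ Ideal.span (gens k n e z)) := by
  haveI : Nontrivial (MvPolynomial (Fin n) k ⧸ Ideal.span (gens k n e z)) :=
    nontrivial_of_ne _ _ ((bA hn he z).ne_zero (Sum.inl ⟨0, by omega⟩))
  apply IsLocalRing.of_isUnit_or_isUnit_one_sub_self
  intro a
  obtain ⟨p, rfl⟩ := Ideal.Quotient.mk_surjective a
  set c := coeff 0 p with hc
  have halg : algebraMap k (MvPolynomial (Fin n) k ⧸ Ideal.span (gens k n e z)) c
      = Ideal.Quotient.mk (Ideal.span (gens k n e z)) (C c) := by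
    have h1 := (Ideal.Quotient.mkₐ k (Ideal.span (gens k n e z))).commutes c
    rw [Ideal.Quotient.mkₐ_eq_mk] at h1
    rw [← h1, MvPolynomial.algebraMap_eq]
  have hsplit : Ideal.Quotient.mk (Ideal.span (gens k n e z)) p
      = algebraMap k _ c + Ideal.Quotient.mk (Ideal.span (gens k n e z)) (p - C c) := by
    rw [halg, ← map_add]
    congr 1
    ring
  have hnilm : IsNilpotent (Ideal.Quotient.mk (Ideal.span (gens k n e z)) (p - C c)) :=
    mk_nilpotent hn he z (Ideal.mem_map_of_mem _ (sub_C_mem_spanX p))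
  by_cases hc0 : c = 0
  · right
    have hzero : algebraMap k (MvPolynomial (Fin n) k ⧸ Ideal.span (gens k n e z)) c = 0 := by
      rw [hc0, map_zero]
    rw [hsplit, hzero, zero_add]
    exact hnilm.isUnit_one_sub
  · left
    rw [hsplit]
    have hfac : algebraMap k (MvPolynomial (Fin n) k ⧸ Ideal.span (gens k n e z)) c
          + Ideal.Quotient.mk (Ideal.span (gens k n e z)) (p - C c)
        = algebraMap k _ c * (1 + algebraMap k _ c⁻¹
          * Ideal.Quotient.mk (Ideal.span (gens k n e z)) (p - C c)) := by
      rw [mul_add, mul_one, ← mul_assoc, ← map_mul, mul_inv_cancel₀ hc0, map_one, one_mul]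
    rw [hfac]
    have hu1 : IsUnit (algebraMap k (MvPolynomial (Fin n) k ⧸ Ideal.span (gens k n e z)) c) :=
      (isUnit_iff_ne_zero.mpr hc0).map (algebraMap k _)
    have hnil2 : IsNilpotent (algebraMap k (MvPolynomial (Fin n) k ⧸ Ideal.span (gens k n e z)) c⁻¹
        * Ideal.Quotient.mk (Ideal.span (gens k n e z)) (p - C c)) := by
      obtain ⟨N, hN⟩ := hnilm
      exact ⟨N, by rw [mul_pow, hN, mul_zero]⟩
    exact hu1.mul hnil2.isUnit_one_add

lemma isArtinian' (hn : 2 ≤ n) {e : ℕ} (he : 2 ≤ e) (z : Fin n) :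
    IsArtinianRing (MvPolynomial (Fin n) k ⧸ Ideal.span (gens k n e z)) := by
  haveI : FiniteDimensional k (MvPolynomial (Fin n) k ⧸ Ideal.span (gens k n e z)) :=
    Module.Finite.of_basis (bA hn he z)
  exact isArtinian_of_tower k inferInstance


end Stmt2Aux

open Stmt2Aux

/-- For `n ≥ 2`, `d ≥ n+2`, the algebra
`A_{n,d} = k[x_1,…,x_n]/(x_i x_j (i<j), x_h² - x_1^{d-n} (h ≥ 2))` is a local Artinian
Gorenstein `k`-algebra of dimension `d` over `k` with Hilbert function `(1,n,1,…,1)`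
(ones in degrees `2,…,d-n`). -/
theorem stmt_2 (k : Type*) [Field k] [IsAlgClosed k] [CharZero k]
    (n d : ℕ) (hn : 2 ≤ n) (hd : n + 2 ≤ d)
    (I : Ideal (MvPolynomial (Fin n) k))
    (hI : I = Ideal.span
      ({p | ∃ i j : Fin n, i < j ∧ p = X i * X j} ∪
       {p | ∃ h : Fin n, h ≠ (⟨0, by omega⟩ : Fin n) ∧ p = X h ^ 2 - X (⟨0, by omega⟩ : Fin n) ^ (d - n)})) :
    IsLocalRing (MvPolynomial (Fin n) k ⧸ I) ∧
    IsArtinianRing (MvPolynomial (Fin n) k ⧸ I) ∧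
    Module.finrank k (Submodule.restrictScalars k
      (Submodule.colon (⊥ : Ideal (MvPolynomial (Fin n) k ⧸ I))
        (Ideal.map (Ideal.Quotient.mk I)
          (Ideal.span (Set.range (X : Fin n → MvPolynomial (Fin n) k)))))) = 1 ∧
    Module.finrank k (MvPolynomial (Fin n) k ⧸ I) = d ∧
    hilbFn I 0 = 1 ∧ hilbFn I 1 = n ∧
    (∀ i : ℕ, 2 ≤ i → i ≤ d - n → hilbFn I i = 1) ∧
    (∀ i : ℕ, d - n < i → hilbFn I i = 0) := by
  have he : 2 ≤ d - n := by omega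
  have hIg : I = Ideal.span (gens k n (d - n) (⟨0, by omega⟩ : Fin n)) := hI
  subst hIg
  refine ⟨isLocal hn he _, isArtinian' hn he _, finrank_socle hn he _, ?_, ?_, ?_, ?_, ?_⟩
  · rw [finrank_A hn he]
    omega
  · unfold hilbFn
    rw [Submodule.pow_zero, Ideal.one_eq_top, Submodule.restrictScalars_top, finrank_top,
      finrank_A hn he, zero_add, finrank_M1 hn he]
    omega
  · unfold hilbFn
    rw [finrank_M1 hn he, finrank_Mi hn he _ (i := 1 + 1) (by omega)]
    omega
  · intro i h2 hie
    unfold hilbFn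
    rw [finrank_Mi hn he _ h2, finrank_Mi hn he _ (i := i + 1) (by omega)]
    omega
  · intro i hi
    unfold hilbFn
    have h2 : 2 ≤ i := by omega
    rw [finrank_Mi hn he _ h2, finrank_Mi hn he _ (i := i + 1) (by omega)]
    omega
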